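/- Let p be an odd prime such that the class of 2 is a generator of the cyclic group (ℤ/pℤ)^*. Then there exists an irreducible λ-quiddity over ℤ/pℤ of size 3·(p−1)/2 (namely the 2-trinomial minimal solution). -/
import Mathlib


namespace Quiddity

variable {A : Type*} [CommRing A]

/-- `mMat [a₁, …, aₙ]` is the matrix product `[[aₙ,-1],[1,0]] ⋯ [[a₁,-1],[1,0]]`. -/
def mMat : List A → Matrix (Fin 2) (Fin 2) A
  | [] => 1
  | a :: t => mMat t * !![a, -1; 1, 0]

/-- Continuant: `cont [] = K₀ = 1`, `cont [a] = K₁(a) = a`, and the continuant recursion. -/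
def cont : List A → A
  | [] => 1
  | [a] => a
  | a :: b :: t => a * cont (b :: t) - cont t

/-- A λ-quiddity is a tuple with `Mₙ(a₁,…,aₙ) = ± Id`. -/
def IsQuiddity (l : List A) : Prop := mMat l = 1 ∨ mMat l = -1

/-- The sum `⊕` of two tuples (meaningful for tuples of length ≥ 2):
`(a₁,…,aₘ) ⊕ (b₁,…,b_l) = (a₁+b_l, a₂,…,a_{m−1}, aₘ+b₁, b₂,…,b_{l−1})`. -/
def oplus (la lb : List A) : List A :=
  (la.headD 0 + lb.getLastD 0) ::
    (la.tail.dropLast ++ (la.getLastD 0 + lb.headD 0) :: lb.tail.dropLast)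

/-- Two tuples are equivalent if one is a cyclic permutation of the other or of its
reversal. -/
def TupleEquiv (l l' : List A) : Prop :=
  List.IsRotated l l' ∨ List.IsRotated l.reverse l'

/-- A λ-quiddity `c` is reducible if `c ∼ a ⊕ b` with `b` a λ-quiddity and both of size ≥ 3. -/
def QuiddityReducible (c : List A) : Prop :=
  ∃ a b : List A, 3 ≤ a.length ∧ 3 ≤ b.length ∧ IsQuiddity b ∧ TupleEquiv c (oplus a b)

/-- `(a, b, a, b, …, a, b)` with `k` repetitions of the pair `(a, b)` (size `2k`). -/
def dynList : ℕ → A → A → List A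
  | 0, _, _ => []
  | k + 1, a, b => a :: b :: dynList k a b

/-- `(u, v, v, u, v, v, …, u, v, v)` with `k` repetitions of the block `(u, v, v)`
(size `3k`). -/
def triList : ℕ → A → A → List A
  | 0, _, _ => []
  | k + 1, a, b => a :: b :: b :: triList k a b

set_option linter.unusedSectionVars false

theorem mMat_append (l₁ l₂ : List A) : mMat (l₁ ++ l₂) = mMat l₂ * mMat l₁ := by
  induction l₁ with
  | nil => simp [mMat]
  | cons a l ih => simp [mMat, ih, mul_assoc]

theorem quiddity_inner {x y : A} {m : List A} (h : IsQuiddity (x :: (m ++ [y]))) :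
    mMat m 0 0 = 1 ∨ mMat m 0 0 = -1 := by
  have he : mMat (x :: (m ++ [y])) = !![y,-1;1,0] * mMat m * !![x,-1;1,0] := by
    show mMat (m ++ [y]) * !![x,-1;1,0] = _
    rw [mMat_append]
    have : mMat [y] = !![y,-1;1,0] := by
      show (1 : Matrix (Fin 2) (Fin 2) A) * !![y,-1;1,0] = _
      rw [one_mul]
    rw [this]
  have hinv1 : ∀ z : A, !![(0:A),1;-1,z] * !![z,-1;1,0] = 1 := by
    intro z; rw [Matrix.mul_fin_two, Matrix.one_fin_two]; norm_num
  have hinv2 : ∀ z : A, !![z,-1;1,0] * !![(0:A),1;-1,z] = 1 := by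
    intro z; rw [Matrix.mul_fin_two, Matrix.one_fin_two]; norm_num
  have hgen : ∀ E : Matrix (Fin 2) (Fin 2) A, mMat (x :: (m ++ [y])) = E →
      mMat m = !![(0:A),1;-1,y] * E * !![(0:A),1;-1,x] := by
    intro E hE
    rw [he] at hE
    calc mMat m = 1 * mMat m * 1 := by rw [one_mul, mul_one]
      _ = (!![(0:A),1;-1,y] * !![y,-1;1,0]) * mMat m * (!![x,-1;1,0] * !![(0:A),1;-1,x]) := by
          rw [hinv1, hinv2]
      _ = !![(0:A),1;-1,y] * (!![y,-1;1,0] * mMat m * !![x,-1;1,0]) * !![(0:A),1;-1,x] := by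
          simp only [Matrix.mul_assoc]
      _ = !![(0:A),1;-1,y] * E * !![(0:A),1;-1,x] := by rw [hE]
  rcases h with h | h
  · right
    rw [hgen 1 h, Matrix.mul_one, Matrix.mul_fin_two]
    norm_num
  · left
    rw [hgen (-1) h, Matrix.mul_neg, Matrix.mul_one, Matrix.neg_mul, Matrix.mul_fin_two]
    norm_num

theorem triList_length (j : ℕ) (a b : A) : (triList j a b).length = 3 * j := by
  induction j with
  | zero => rfl
  | succ n ih => simp [triList, ih]; ring

theorem triList_add (i j : ℕ) (a b : A) :
    triList (i + j) a b = triList i a b ++ triList j a b := by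
  induction i with
  | zero => simp [triList]
  | succ n ih => simp [triList, Nat.succ_add, ih]

theorem suffix_triList {a b : A} : ∀ {m : ℕ} {s : List A}, s <:+ triList m a b →
    ∃ j, s = triList j a b ∨ s = b :: triList j a b ∨ s = b :: b :: triList j a b := by
  intro m
  induction m with
  | zero => intro s hs; simp [triList] at hs; exact ⟨0, Or.inl (by simp [hs, triList])⟩
  | succ n ih =>
    intro s hs
    rw [triList, List.suffix_cons_iff] at hs
    rcases hs with h | hs
    · exact ⟨n + 1, Or.inl (by rw [h, triList])⟩
    rw [List.suffix_cons_iff] at hs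
    rcases hs with h | hs
    · exact ⟨n, Or.inr (Or.inr h)⟩
    rw [List.suffix_cons_iff] at hs
    rcases hs with h | hs
    · exact ⟨n, Or.inr (Or.inl h)⟩
    · exact ih hs

theorem prefix_triList {a b : A} : ∀ {m : ℕ} {q : List A}, q <+: triList m a b →
    ∃ j, q = triList j a b ∨ q = triList j a b ++ [a] ∨ q = triList j a b ++ [a, b] := by
  intro m
  induction m with
  | zero => intro q hq; simp [triList] at hq; exact ⟨0, Or.inl (by simp [hq, triList])⟩
  | succ n ih =>
    intro q hq
    rw [triList, List.prefix_cons_iff] at hq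
    rcases hq with h | ⟨q₁, rfl, hq₁⟩
    · exact ⟨0, Or.inl (by simp [h, triList])⟩
    rw [List.prefix_cons_iff] at hq₁
    rcases hq₁ with h | ⟨q₂, rfl, hq₂⟩
    · exact ⟨0, Or.inr (Or.inl (by simp [h, triList]))⟩
    rw [List.prefix_cons_iff] at hq₂
    rcases hq₂ with h | ⟨q₃, rfl, hq₃⟩
    · exact ⟨0, Or.inr (Or.inr (by simp [h, triList]))⟩
    obtain ⟨j, hj⟩ := ih hq₃
    refine ⟨j + 1, ?_⟩
    rcases hj with h | h | h <;> rw [h] <;> simp [triList]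

theorem infix_triList {a b : A} {m : ℕ} {w : List A} (hw : w <:+: triList m a b)
    (hne : w ≠ []) :
    ∃ j S P, (S = ([] : List A) ∨ S = [b] ∨ S = [b, b]) ∧
      (P = ([] : List A) ∨ P = [a] ∨ P = [a, b]) ∧ w = S ++ (triList j a b ++ P) := by
  rw [List.infix_iff_prefix_suffix] at hw
  obtain ⟨s, hpre, hsuf⟩ := hw
  obtain ⟨j', hj'⟩ := suffix_triList hsuf
  have hmain : ∀ {q : List A} {j0 : ℕ}, q <+: triList j0 a b →
      ∃ j P, (P = ([] : List A) ∨ P = [a] ∨ P = [a, b]) ∧ q = triList j a b ++ P := by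
    intro q j0 hq
    obtain ⟨j, hj⟩ := prefix_triList hq
    rcases hj with h | h | h
    · exact ⟨j, [], Or.inl rfl, by simp [h]⟩
    · exact ⟨j, [a], Or.inr (Or.inl rfl), h⟩
    · exact ⟨j, [a, b], Or.inr (Or.inr rfl), h⟩
  rcases hj' with h | h | h
  · subst h
    obtain ⟨j, P, hP, hw⟩ := hmain hpre
    exact ⟨j, [], P, Or.inl rfl, hP, by simp [hw]⟩
  · subst h
    rw [List.prefix_cons_iff] at hpre
    rcases hpre with h | ⟨q₁, rfl, hq₁⟩
    · exact absurd h hne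
    obtain ⟨j, P, hP, hw⟩ := hmain hq₁
    exact ⟨j, [b], P, Or.inr (Or.inl rfl), hP, by simp [hw]⟩
  · subst h
    rw [List.prefix_cons_iff] at hpre
    rcases hpre with h | ⟨q₁, rfl, hq₁⟩
    · exact absurd h hne
    rw [List.prefix_cons_iff] at hq₁
    rcases hq₁ with h | ⟨q₂, rfl, hq₂⟩
    · subst h
      exact ⟨0, [b], [], Or.inr (Or.inl rfl), Or.inl rfl, by simp [triList]⟩
    obtain ⟨j, P, hP, hw⟩ := hmain hq₂
    exact ⟨j, [b, b], P, Or.inr (Or.inr rfl), hP, by simp [hw]⟩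

theorem rotate_infix_double (l : List A) (n : ℕ) : l.rotate n <:+: l ++ l := by
  rcases eq_or_ne l [] with rfl | hl
  · simp
  have hlen : 0 < l.length := List.length_pos_iff.mpr hl
  rw [← List.rotate_mod, List.rotate_eq_drop_append_take (Nat.le_of_lt (Nat.mod_lt _ hlen))]
  refine ⟨l.take (n % l.length), l.drop (n % l.length), ?_⟩
  conv_rhs => rw [← List.take_append_drop (n % l.length) l]
  simp only [List.append_assoc]

theorem mMat_reverse (l : List A) :
    mMat l.reverse = !![(1:A), 0; 0, -1] * (mMat l).transpose * !![(1:A), 0; 0, -1] := by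
  induction l with
  | nil =>
    simp only [List.reverse_nil, mMat]
    rw [Matrix.transpose_one, Matrix.mul_one, Matrix.one_fin_two, Matrix.mul_fin_two]
    norm_num
  | cons a l ih =>
    rw [List.reverse_cons, mMat_append, ih]
    have h1 : mMat [a] = !![a, -1; 1, 0] := by
      show (1 : Matrix (Fin 2) (Fin 2) A) * !![a,-1;1,0] = _
      rw [one_mul]
    have h2 : mMat (a :: l) = mMat l * !![a, -1; 1, 0] := rfl
    rw [h1, h2, Matrix.transpose_mul]
    have h3 : !![a, -1; 1, 0] * !![(1:A), 0; 0, -1] =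
        !![(1:A), 0; 0, -1] * (!![a, -1; 1, 0]).transpose := by
      have ht : (!![a, -1; 1, 0]).transpose = !![a, 1; -1, 0] := by
        ext i j
        fin_cases i <;> fin_cases j <;> simp [Matrix.transpose_apply]
      rw [ht, Matrix.mul_fin_two, Matrix.mul_fin_two]
      norm_num
    rw [← Matrix.mul_assoc, ← Matrix.mul_assoc, h3,
      Matrix.mul_assoc !![(1:A), 0; 0, -1] (!![a, -1; 1, 0]).transpose]

theorem mMat_reverse_00 (l : List A) : mMat l.reverse 0 0 = mMat l 0 0 := by
  rw [mMat_reverse]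
  simp [Matrix.mul_apply, Fin.sum_univ_two, Matrix.cons_val_zero, Matrix.cons_val_one,
    Matrix.head_cons, Matrix.transpose_apply, Matrix.vecMul, dotProduct]

theorem sq_neg_pow (x : A) (j : ℕ) : ((-x)^j)^2 = (x^2)^j := by
  rw [← pow_mul, mul_comm, pow_mul, neg_sq]

theorem case_shape1 (x : A) (j : ℕ) : (x * (-x)^j)^2 = (x^2)^(j+1) := by
  rw [mul_pow, sq_neg_pow, ← pow_succ']

theorem case_shape2 (x : A) (j : ℕ) : (x^2 * (-x)^j)^2 = (x^2)^(2+j) := by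
  rw [mul_pow, sq_neg_pow, ← pow_add]

theorem mMat_triList (t : A) (h2t : 2 * t = 1) (j : ℕ) :
    mMat (triList j 2 t) = !![(-2)^j, t * ((-t)^j - (-2)^j); 0, (-t)^j] := by
  induction j with
  | zero =>
    show (1 : Matrix (Fin 2) (Fin 2) A) = _
    rw [Matrix.one_fin_two]
    norm_num
  | succ n ih =>
    have e : mMat (triList (n+1) 2 t) =
        mMat (triList n 2 t) * !![t,-1;1,0] * !![t,-1;1,0] * !![(2:A),-1;1,0] := rfl
    rw [e, ih, Matrix.mul_fin_two, Matrix.mul_fin_two, Matrix.mul_fin_two]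
    rw [← Matrix.ext_iff]
    simp only [Fin.forall_fin_two, Matrix.of_apply, Matrix.cons_val', Matrix.cons_val_zero,
      Matrix.cons_val_one, Matrix.head_cons, Matrix.empty_val', Matrix.cons_val_fin_one,
      Matrix.head_fin_const]
    refine ⟨⟨?_, ?_⟩, ?_, ?_⟩
    · linear_combination (t * (-t)^n) * h2t
    · linear_combination (-(-2:A)^n) * h2t
    · linear_combination ((-t)^n) * h2t
    · ring


section KeyLemma

variable {p : ℕ} [Fact p.Prime]

theorem two_pow_of_t_pow {t : ZMod p} (h2t : 2 * t = 1) {m : ℕ} (h : t^m = 1) :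
    (2:ZMod p)^m = 1 := by
  have hm : (2:ZMod p)^m * t^m = 1 := by rw [← mul_pow, h2t, one_pow]
  rwa [h, mul_one] at hm

theorem no_two_pow (hord : ∀ m, (2:ZMod p)^m = 1 → (p-1) ∣ m) {k : ℕ}
    (hk : p - 1 = 2*k) {e : ℕ} (he : 0 < e) (hek : e < k)
    (h : (2:ZMod p)^(2*e) = 1) : False := by
  have := Nat.le_of_dvd (by omega) (hord _ h)
  omega

theorem key {t : ZMod p} (h2t : (2:ZMod p) * t = 1) (h2 : (2:ZMod p) ≠ 0)
    (hord : ∀ m, (2:ZMod p)^m = 1 → (p-1) ∣ m) {k : ℕ} (hk : p - 1 = 2*k) (hk0 : 0 < k)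
    {w : List (ZMod p)} (hinf : w <:+: triList (k + k) 2 t) (hne : w ≠ [])
    (hlen : w.length + 3 ≤ 3 * k) :
    ¬ (mMat w 0 0 = 1 ∨ mMat w 0 0 = -1) := by
  intro hval
  obtain ⟨j, S, P, hS, hP, rfl⟩ := infix_triList hinf hne
  have hMj := mMat_triList t h2t j
  have hlw := hlen
  rw [List.length_append, List.length_append, triList_length] at hlw
  have hsq_of : ∀ z : ZMod p, (z = 1 ∨ z = -1) → z^2 = 1 := by
    rintro z (rfl | rfl) <;> norm_num
  rcases hS with rfl | rfl | rfl <;> rcases hP with rfl | rfl | rfl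
  · -- S = [], P = [] : value (-2)^j
    have hE : mMat (([]:List (ZMod p)) ++ (triList j 2 t ++ [])) 0 0 = (-2:ZMod p)^j := by
      simp [hMj]
    rw [hE] at hval
    have hj0 : 0 < j := by
      rcases Nat.eq_zero_or_pos j with rfl | h
      · simp [triList] at hne
      · exact h
    have h1 : (2:ZMod p)^(2*j) = 1 := by
      have h0 := hsq_of _ hval
      rw [sq_neg_pow] at h0
      rw [pow_mul]; exact h0
    exact no_two_pow hord hk hj0 (by simp at hlw; omega) h1
  · -- S = [], P = [2] : value 2*(-2)^j
    have hE : mMat (([]:List (ZMod p)) ++ (triList j 2 t ++ [2])) 0 0 = 2*(-2:ZMod p)^j := by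
      rw [mMat_append, mMat_append, hMj]
      simp only [mMat, one_mul, Matrix.one_mul, Matrix.mul_one, Matrix.mul_fin_two]
      simp only [Matrix.of_apply, Matrix.cons_val', Matrix.cons_val_zero, Matrix.cons_val_one,
        Matrix.head_cons, Matrix.empty_val', Matrix.cons_val_fin_one, Matrix.head_fin_const]
      ring
    rw [hE] at hval
    have h1 : (2:ZMod p)^(2*(j+1)) = 1 := by
      have h0 := hsq_of _ hval
      rw [case_shape1] at h0
      rw [pow_mul]; exact h0
    exact no_two_pow hord hk (by omega) (by simp at hlw; omega) h1
  · -- S = [], P = [2, t] : value 0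
    have hE : mMat (([]:List (ZMod p)) ++ (triList j 2 t ++ [2, t])) 0 0 = 0 := by
      rw [mMat_append, mMat_append, hMj]
      simp only [mMat, one_mul, Matrix.one_mul, Matrix.mul_one, Matrix.mul_fin_two]
      simp only [Matrix.of_apply, Matrix.cons_val', Matrix.cons_val_zero, Matrix.cons_val_one,
        Matrix.head_cons, Matrix.empty_val', Matrix.cons_val_fin_one, Matrix.head_fin_const]
      linear_combination ((-2:ZMod p)^j) * h2t
    rw [hE] at hval
    rcases hval with h | h
    · exact one_ne_zero h.symm
    · exact one_ne_zero (show (1:ZMod p) = 0 by linear_combination h)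
  · -- S = [t], P = [] : value t*(-t)^j
    have hE : mMat (([t]:List (ZMod p)) ++ (triList j 2 t ++ [])) 0 0 = t*(-t)^j := by
      rw [mMat_append, mMat_append, hMj]
      simp only [mMat, one_mul, Matrix.one_mul, Matrix.mul_one, Matrix.mul_fin_two]
      simp only [Matrix.of_apply, Matrix.cons_val', Matrix.cons_val_zero, Matrix.cons_val_one,
        Matrix.head_cons, Matrix.empty_val', Matrix.cons_val_fin_one, Matrix.head_fin_const]
      ring
    rw [hE] at hval
    have h0 := hsq_of _ hval
    rw [case_shape1] at h0
    have h1 : t^(2*(j+1)) = 1 := by rw [pow_mul]; exact h0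
    exact no_two_pow hord hk (by omega) (by simp at hlw; omega) (two_pow_of_t_pow h2t h1)
  · -- S = [t], P = [2] : value 0
    have hE : mMat (([t]:List (ZMod p)) ++ (triList j 2 t ++ [2])) 0 0 = 0 := by
      rw [mMat_append, mMat_append, hMj]
      simp only [mMat, one_mul, Matrix.one_mul, Matrix.mul_one, Matrix.mul_fin_two]
      simp only [Matrix.of_apply, Matrix.cons_val', Matrix.cons_val_zero, Matrix.cons_val_one,
        Matrix.head_cons, Matrix.empty_val', Matrix.cons_val_fin_one, Matrix.head_fin_const]
      linear_combination ((-t)^j) * h2t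
    rw [hE] at hval
    rcases hval with h | h
    · exact one_ne_zero h.symm
    · exact one_ne_zero (show (1:ZMod p) = 0 by linear_combination h)
  · -- S = [t], P = [2, t] : value -(t*(-t)^j)
    have hE : mMat (([t]:List (ZMod p)) ++ (triList j 2 t ++ [2, t])) 0 0 = -(t*(-t)^j) := by
      rw [mMat_append, mMat_append, hMj]
      simp only [mMat, one_mul, Matrix.one_mul, Matrix.mul_one, Matrix.mul_fin_two]
      simp only [Matrix.of_apply, Matrix.cons_val', Matrix.cons_val_zero, Matrix.cons_val_one,
        Matrix.head_cons, Matrix.empty_val', Matrix.cons_val_fin_one, Matrix.head_fin_const]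
      linear_combination (t*(-2:ZMod p)^j + t*((-t)^j - (-2:ZMod p)^j)) * h2t
    rw [hE] at hval
    have h0 := hsq_of _ hval
    rw [neg_sq, case_shape1] at h0
    have h1 : t^(2*(j+1)) = 1 := by rw [pow_mul]; exact h0
    exact no_two_pow hord hk (by omega) (by simp at hlw; omega) (two_pow_of_t_pow h2t h1)
  · -- S = [t,t], P = [] : QR case, value t^2*(-t)^j - (-2)^j
    have hE : mMat (([t,t]:List (ZMod p)) ++ (triList j 2 t ++ [])) 0 0
        = t^2*(-t)^j - (-2:ZMod p)^j := by
      rw [mMat_append, mMat_append, hMj]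
      simp only [mMat, one_mul, Matrix.one_mul, Matrix.mul_one, Matrix.mul_fin_two]
      simp only [Matrix.of_apply, Matrix.cons_val', Matrix.cons_val_zero, Matrix.cons_val_one,
        Matrix.head_cons, Matrix.empty_val', Matrix.cons_val_fin_one, Matrix.head_fin_const]
      ring
    rw [hE] at hval
    have hex : ∃ ε : ZMod p, (ε = 1 ∨ ε = -1) ∧ t^2*t^j - 2^j = ε := by
      rcases Nat.even_or_odd j with hj | hj
      · rw [hj.neg_pow, hj.neg_pow] at hval
        rcases hval with h | h
        · exact ⟨1, Or.inl rfl, h⟩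
        · exact ⟨-1, Or.inr rfl, h⟩
      · rw [hj.neg_pow, hj.neg_pow] at hval
        rcases hval with h | h
        · exact ⟨-1, Or.inr rfl, by linear_combination -h⟩
        · exact ⟨1, Or.inl rfl, by linear_combination -h⟩
    obtain ⟨ε, hε1, hε⟩ := hex
    have hmul : (2:ZMod p)^(j+2) * (t^2 * t^j) = 1 := by
      have h1 : (2:ZMod p)^(j+2) * t^(j+2) = 1 := by rw [← mul_pow, h2t, one_pow]
      calc (2:ZMod p)^(j+2) * (t^2 * t^j) = (2:ZMod p)^(j+2) * t^(j+2) := by ring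
        _ = 1 := h1
    have hε2 : ε^2 = 1 := hsq_of _ hε1
    have h5 : (1:ZMod p) - 2^(2*j+2) = ε * 2^(j+2) := by
      linear_combination (2:ZMod p)^(j+2) * hε - hmul
    have hy : ((2:ZMod p)^(j+1) + ε)^2 = 2 := by linear_combination hε2 - h5
    have hy0 : (2:ZMod p)^(j+1) + ε ≠ 0 := by
      intro h
      rw [h] at hy
      exact h2 (by linear_combination -hy)
    have hf : ((2:ZMod p)^(j+1) + ε)^(p-1) = 1 := ZMod.pow_card_sub_one_eq_one hy0
    have h2k : (2:ZMod p)^k = 1 := by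
      calc (2:ZMod p)^k = (((2:ZMod p)^(j+1) + ε)^2)^k := by rw [hy]
        _ = ((2:ZMod p)^(j+1) + ε)^(2*k) := by rw [← pow_mul, mul_comm]
        _ = ((2:ZMod p)^(j+1) + ε)^(p-1) := by rw [hk]
        _ = 1 := hf
    have := Nat.le_of_dvd hk0 (hord _ h2k)
    omega
  · -- S = [t,t], P = [2] : value -(2*(-2)^j)
    have hE : mMat (([t,t]:List (ZMod p)) ++ (triList j 2 t ++ [2])) 0 0 = -(2*(-2:ZMod p)^j) := by
      rw [mMat_append, mMat_append, hMj]
      simp only [mMat, one_mul, Matrix.one_mul, Matrix.mul_one, Matrix.mul_fin_two]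
      simp only [Matrix.of_apply, Matrix.cons_val', Matrix.cons_val_zero, Matrix.cons_val_one,
        Matrix.head_cons, Matrix.empty_val', Matrix.cons_val_fin_one, Matrix.head_fin_const]
      linear_combination (t*(-t)^j) * h2t
    rw [hE] at hval
    have h0 := hsq_of _ hval
    rw [neg_sq, case_shape1] at h0
    have h1 : (2:ZMod p)^(2*(j+1)) = 1 := by rw [pow_mul]; exact h0
    exact no_two_pow hord hk (by omega) (by simp at hlw; omega) h1
  · -- S = [t,t], P = [2,t] : value -(t^2*(-t)^j)
    have hE : mMat (([t,t]:List (ZMod p)) ++ (triList j 2 t ++ [2, t])) 0 0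
        = -(t^2*(-t)^j) := by
      rw [mMat_append, mMat_append, hMj]
      simp only [mMat, one_mul, Matrix.one_mul, Matrix.mul_one, Matrix.mul_fin_two]
      simp only [Matrix.of_apply, Matrix.cons_val', Matrix.cons_val_zero, Matrix.cons_val_one,
        Matrix.head_cons, Matrix.empty_val', Matrix.cons_val_fin_one, Matrix.head_fin_const]
      linear_combination ((t^2-1)*(-2:ZMod p)^j + t^2*((-t)^j - (-2:ZMod p)^j)) * h2t
    rw [hE] at hval
    have h0 := hsq_of _ hval
    rw [neg_sq, case_shape2] at h0
    have h1 : t^(2*(2+j)) = 1 := by rw [pow_mul]; exact h0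
    exact no_two_pow hord hk (by omega) (by simp at hlw; omega) (two_pow_of_t_pow h2t h1)

end KeyLemma

end Quiddity

open Quiddity

/-- if the class of 2 generates `(ℤ/pℤ)*` (`p` an odd prime), then the
`2`-trinomial minimal solution is an irreducible λ-quiddity of size `3(p−1)/2`. -/
theorem stmt17 (p : ℕ) (hp : p.Prime) (hodd : Odd p)
    (hgen : ∃ w : (ZMod p)ˣ, (w : ZMod p) = 2 ∧
      ∀ v : (ZMod p)ˣ, v ∈ Subgroup.zpowers w) :
    ∃ k : ℕ, 0 < k ∧
      IsQuiddity (triList k (2 : ZMod p) (2 : ZMod p)⁻¹) ∧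
      (∀ j, 0 < j → IsQuiddity (triList j (2 : ZMod p) (2 : ZMod p)⁻¹) → k ≤ j) ∧
      ¬ QuiddityReducible (triList k (2 : ZMod p) (2 : ZMod p)⁻¹) ∧
      (triList k (2 : ZMod p) (2 : ZMod p)⁻¹).length = 3 * (p - 1) / 2 := by
  haveI : Fact p.Prime := ⟨hp⟩
  obtain ⟨u, hu2, hugen⟩ := hgen
  have hp2 : p ≠ 2 := by rintro rfl; obtain ⟨r, hr⟩ := hodd; omega
  have hp3 : 3 ≤ p := by have := hp.two_le; omega
  have h2 : (2 : ZMod p) ≠ 0 := by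
    have h22 : ((2:ℕ) : ZMod p) ≠ 0 := by
      rw [Ne, ZMod.natCast_eq_zero_iff]
      exact fun hd => hp2 ((Nat.prime_dvd_prime_iff_eq hp Nat.prime_two).mp hd)
    simpa using h22
  set t := (2 : ZMod p)⁻¹ with htdef
  have h2t : (2 : ZMod p) * t = 1 := mul_inv_cancel₀ h2
  obtain ⟨r, hr⟩ := hodd
  set k := (p - 1) / 2 with hkdef
  have hk : p - 1 = 2 * k := by omega
  have hk0 : 0 < k := by omega
  have hord : ∀ m, (2 : ZMod p) ^ m = 1 → (p - 1) ∣ m := by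
    intro m hm
    have hcard : orderOf u = p - 1 := by
      rw [orderOf_eq_card_of_forall_mem_zpowers hugen, Nat.card_eq_fintype_card,
        ZMod.card_units]
    have hu : u ^ m = 1 := by
      apply Units.ext
      rw [Units.val_pow_eq_pow_val, hu2, hm, Units.val_one]
    rw [← hcard]
    exact orderOf_dvd_of_pow_eq_one hu
  have hfer : (2 : ZMod p) ^ (p - 1) = 1 := ZMod.pow_card_sub_one_eq_one h2
  have h2k : (2 : ZMod p) ^ k = -1 := by
    have hsq1 : ((2 : ZMod p) ^ k) ^ 2 = 1 := by
      rw [← pow_mul, Nat.mul_comm, ← hk]; exact hfer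
    have hfac : ((2 : ZMod p) ^ k - 1) * ((2 : ZMod p) ^ k + 1) = 0 := by
      linear_combination hsq1
    rcases mul_eq_zero.mp hfac with h | h
    · exfalso
      have h1 : (2 : ZMod p) ^ k = 1 := by linear_combination h
      have := Nat.le_of_dvd hk0 (hord _ h1)
      omega
    · linear_combination h
  have htk : t ^ k = -1 := by
    have hm : (2 : ZMod p) ^ k * t ^ k = 1 := by rw [← mul_pow, h2t, one_pow]
    rw [h2k] at hm
    linear_combination -hm
  have hMk := mMat_triList t h2t k
  have hneg : (-1 : Matrix (Fin 2) (Fin 2) (ZMod p)) = !![-1, 0; 0, -1] := by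
    ext i j; fin_cases i <;> fin_cases j <;> simp [Matrix.one_apply]
  refine ⟨k, hk0, ?_, ?_, ?_, ?_⟩
  · rcases Nat.even_or_odd k with hke | hko
    · right
      rw [hMk, hke.neg_pow, hke.neg_pow, h2k, htk, hneg]
      rw [← Matrix.ext_iff]
      simp only [Fin.forall_fin_two, Matrix.of_apply, Matrix.cons_val', Matrix.cons_val_zero,
        Matrix.cons_val_one, Matrix.head_cons, Matrix.empty_val', Matrix.cons_val_fin_one,
        Matrix.head_fin_const]
      norm_num
    · left
      rw [hMk, hko.neg_pow, hko.neg_pow, h2k, htk, Matrix.one_fin_two]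
      rw [← Matrix.ext_iff]
      simp only [Fin.forall_fin_two, Matrix.of_apply, Matrix.cons_val', Matrix.cons_val_zero,
        Matrix.cons_val_one, Matrix.head_cons, Matrix.empty_val', Matrix.cons_val_fin_one,
        Matrix.head_fin_const]
      norm_num
  · intro j hj hq
    have hMj := mMat_triList t h2t j
    have hj00 : (-2 : ZMod p) ^ j = 1 ∨ (-2 : ZMod p) ^ j = -1 := by
      rcases hq with h | h
      · left
        rw [hMj] at h
        have h0 := congrFun (congrFun h 0) 0
        simpa [Matrix.one_apply] using h0
      · right
        rw [hMj, hneg] at h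
        have h0 := congrFun (congrFun h 0) 0
        simpa using h0
    have hsq1 : (2 : ZMod p) ^ (2 * j) = 1 := by
      have h0 : ((-2 : ZMod p) ^ j) ^ 2 = 1 := by
        rcases hj00 with h | h <;> rw [h] <;> norm_num
      rw [sq_neg_pow] at h0
      rw [pow_mul]; exact h0
    have := Nat.le_of_dvd (by omega) (hord _ hsq1)
    omega
  · rintro ⟨a, b, ha3, hb3, hbq, hequiv⟩
    obtain ⟨x, b', rfl⟩ : ∃ x b', b = x :: b' := by
      cases b with
      | nil => simp at hb3
      | cons x b' => exact ⟨x, b', rfl⟩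
    rcases List.eq_nil_or_concat b' with rfl | ⟨m, y, rfl⟩
    · simp at hb3
    simp only [List.concat_eq_append] at hb3 hbq hequiv
    have hcc := quiddity_inner hbq
    have hb3' : 3 ≤ m.length + 2 := by simpa using hb3
    have hsuffix : m <:+ oplus a (x :: (m ++ [y])) := by
      rw [oplus]
      have hdl : (x :: (m ++ [y])).tail.dropLast = m := by simp
      rw [hdl]
      exact ⟨(a.headD 0 + (x :: (m ++ [y])).getLastD 0) ::
        (a.tail.dropLast ++ [a.getLastD 0 + (x :: (m ++ [y])).headD 0]), by simp⟩
    have hda : (oplus a (x :: (m ++ [y]))).length = a.length - 2 + m.length + 2 := by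
      simp [oplus]
      omega
    have hcadd : triList k (2 : ZMod p) t ++ triList k (2 : ZMod p) t
        = triList (k + k) (2 : ZMod p) t := (triList_add k k _ _).symm
    rcases hequiv with hrot | hrot <;> obtain ⟨n, hn⟩ := hrot
    · have hdinf : oplus a (x :: (m ++ [y])) <:+: triList (k + k) (2 : ZMod p) t :=
        hcadd ▸ hn ▸ rotate_infix_double (triList k (2 : ZMod p) t) n
      have hminf := hsuffix.isInfix.trans hdinf
      have hdlen : (oplus a (x :: (m ++ [y]))).length = 3 * k := by
        rw [← hn, List.length_rotate, triList_length]
      refine key h2t h2 hord hk hk0 hminf ?_ ?_ hcc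
      · exact List.length_pos_iff.mp (by omega)
      · omega
    · have hdinf : oplus a (x :: (m ++ [y])) <:+: (triList (k + k) (2 : ZMod p) t).reverse := by
        have h1 : oplus a (x :: (m ++ [y])) <:+:
            (triList k (2 : ZMod p) t).reverse ++ (triList k (2 : ZMod p) t).reverse :=
          hn ▸ rotate_infix_double _ n
        have h2' : (triList k (2 : ZMod p) t).reverse ++ (triList k (2 : ZMod p) t).reverse
            = (triList (k + k) (2 : ZMod p) t).reverse := by
          rw [← List.reverse_append, hcadd]
        exact h2' ▸ h1
      have hminf0 := hsuffix.isInfix.trans hdinf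
      have hminf : m.reverse <:+: triList (k + k) (2 : ZMod p) t := by
        have h3 := (List.reverse_infix
          (l₁ := m) (l₂ := (triList (k + k) (2 : ZMod p) t).reverse)).mpr hminf0
        rwa [List.reverse_reverse] at h3
      have hdlen : (oplus a (x :: (m ++ [y]))).length = 3 * k := by
        rw [← hn, List.length_rotate, List.length_reverse, triList_length]
      refine key h2t h2 hord hk hk0 hminf ?_ ?_ ?_
      · simp only [ne_eq, List.reverse_eq_nil_iff]
        exact List.length_pos_iff.mp (by omega)
      · rw [List.length_reverse]; omega
      · rw [mMat_reverse_00]; exact hcc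
  · rw [triList_length]; omega
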